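/- Let I_1, …, I_t be Multistage 2-SAT instances, each with d = 1, the same variable set X = {x_1,…,x_n}, and each with τ stages. Form a single instance I with d = 1 over X by concatenating the stage sequences of I_1, …, I_t, inserting between consecutive instances n buffer stages each consisting of the tautological formula (x_1 ∨ ¬x_1). Then I is a yes-instance if and only if every I_i is a yes-instance. -/

import Mathlib

/-- A CNF formula: a list of clauses, each clause a list of literals `(variable, sign)`. -/
abbrev CNF (V : Type) := List (List (V × Bool))

/-- `f` satisfies the CNF `C`: every clause contains a literal evaluating to true. -/
def SatCNF {V : Type} (f : V → Bool) (C : CNF V) : Prop :=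
  ∀ cl ∈ C, ∃ l ∈ cl, f l.1 = l.2

/-- Hamming distance between two truth assignments. -/
def hdiff {V : Type} [Fintype V] (f g : V → Bool) : ℕ :=
  (Finset.univ.filter fun x => f x ≠ g x).card

/-- Yes-instance of Multistage SAT, stages given as a list of CNF formulas. -/
def MSatYes {V : Type} [Fintype V] (Φ : List (CNF V)) (d : ℕ) : Prop :=
  ∃ f : Fin Φ.length → V → Bool,
    (∀ i, SatCNF (f i) (Φ.get i)) ∧
    ∀ (i : ℕ) (h : i + 1 < Φ.length),
      hdiff (f ⟨i, Nat.lt_of_succ_lt h⟩) (f ⟨i + 1, h⟩) ≤ d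

/-- Yes-instance of Multistage SAT, stages given as a function `Fin τ → CNF V`. -/
def MSatYesF {V : Type} [Fintype V] (τ : ℕ) (Φ : Fin τ → CNF V) (d : ℕ) : Prop :=
  ∃ f : Fin τ → V → Bool,
    (∀ i, SatCNF (f i) (Φ i)) ∧
    ∀ (i : ℕ) (h : i + 1 < τ),
      hdiff (f ⟨i, Nat.lt_of_succ_lt h⟩) (f ⟨i + 1, h⟩) ≤ d

/-- A 2-CNF: every clause has at most two literals. -/
def Is2CNF {V : Type} (C : CNF V) : Prop := ∀ cl ∈ C, cl.length ≤ 2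

section Aux

variable {V : Type} [Fintype V]

lemma msat_iff {Φ : List (CNF V)} {d : ℕ} :
    MSatYes Φ d ↔ ∃ fs : List (V → Bool), List.Forall₂ SatCNF fs Φ ∧
      List.Chain' (fun a b => hdiff a b ≤ d) fs := by
  constructor
  · rintro ⟨f, hsat, hstep⟩
    refine ⟨List.ofFn f, ?_, ?_⟩
    · rw [List.forall₂_iff_get]
      refine ⟨by simp, fun i h₁ h₂ => ?_⟩
      simpa using hsat ⟨i, h₂⟩
    · refine List.isChain_iff_getElem.2 ?_
      intro i hi
      simp only [List.length_ofFn] at hi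
      have h : i + 1 < Φ.length := by omega
      simpa using hstep i h
  · rintro ⟨fs, hfa, hc⟩
    have hl := hfa.length_eq
    refine ⟨fun i => fs.get ⟨i.1, by omega⟩, fun i => ?_, fun i h => ?_⟩
    · have := (List.forall₂_iff_get.1 hfa).2 i.1 (by omega) i.2
      simpa using this
    · have := List.isChain_iff_getElem.1 hc i (by omega)
      simpa using this

lemma hdiff_eq_zero {f g : V → Bool} (h : hdiff f g = 0) : f = g := by
  funext x
  by_contra hx
  have hm : x ∈ Finset.univ.filter fun y => f y ≠ g y := by simp [hx]
  have hpos := Finset.card_pos.2 ⟨x, hm⟩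
  have h0 : (Finset.univ.filter fun y => f y ≠ g y).card = 0 := h
  omega

lemma hdiff_le_card (f g : V → Bool) : hdiff f g ≤ Fintype.card V :=
  Finset.card_filter_le _ _

lemma last_mem_eq {α : Type*} {a b : α} {p : List α}
    (hplast : (a :: p).getLast (by simp) = b) {x : α} (hx : p.getLast? = some x) : x = b := by
  have hne : p ≠ [] := by rintro rfl; simp at hx
  rw [List.getLast_cons hne] at hplast
  rw [List.getLast?_eq_getLast hne, Option.some.injEq] at hx
  rw [← hx, ← hplast]

lemma getLast_cons_append_singleton {α : Type*} (a b : α) (p : List α) :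
    (a :: (p ++ [b])).getLast (by simp) = b :=
  List.getLast_concat (l := a :: p)

lemma path_lemma : ∀ (n : ℕ) (g h : V → Bool), hdiff g h ≤ n →
    ∃ p : List (V → Bool), p.length = n ∧
      List.Chain' (fun a b => hdiff a b ≤ 1) (g :: p) ∧
      (g :: p).getLast (by simp) = h := by
  intro n
  induction n with
  | zero =>
    intro g h hle
    have : g = h := hdiff_eq_zero (Nat.le_zero.1 hle)
    exact ⟨[], rfl, List.isChain_singleton _, this⟩
  | succ n ih =>
    intro g h hle
    by_cases hn : hdiff g h ≤ n
    · obtain ⟨p, hp, hc, hlast⟩ := ih g h hn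
      refine ⟨p ++ [h], by simp [hp], ?_, ?_⟩
      · rw [show g :: (p ++ [h]) = (g :: p) ++ [h] from rfl]
        apply hc.append (List.isChain_singleton _)
        intro x hx y hy
        simp only [List.head?_cons, Option.mem_def, Option.some.injEq] at hy
        subst hy
        have hx' : x = h := by
          rw [List.getLast?_eq_getLast (l := g :: p) (by simp), Option.mem_def,
            Option.some.injEq] at hx
          rw [← hx, ← hlast]
        rw [hx']
        simp [hdiff]
      · exact getLast_cons_append_singleton _ _ _
    · classical
      have hcard : hdiff g h = n + 1 := le_antisymm hle (by omega)
      have hpos : 0 < hdiff g h := by omega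
      obtain ⟨x, hx⟩ := Finset.card_pos.1 hpos
      simp only [Finset.mem_filter, Finset.mem_univ, true_and] at hx
      set g' := Function.update g x (h x) with hg'
      have h1 : (Finset.univ.filter fun y => g y ≠ g' y) = {x} := by
        ext y
        by_cases hy : y = x <;> simp [hg', Function.update_apply, hy, hx]
      have h2 : (Finset.univ.filter fun y => g' y ≠ h y) =
          (Finset.univ.filter fun y => g y ≠ h y).erase x := by
        ext y
        by_cases hy : y = x <;>
          simp [hg', Function.update_apply, hy, Finset.mem_erase]
      have hgg' : hdiff g g' = 1 := by rw [hdiff, h1]; simp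
      have hg'h : hdiff g' h ≤ n := by
        rw [hdiff, h2, Finset.card_erase_of_mem (by simp [hx])]
        rw [hdiff] at hcard
        omega
      obtain ⟨p, hp, hc, hlast⟩ := ih g' h hg'h
      refine ⟨g' :: p, by simp [hp], ?_, ?_⟩
      · refine List.isChain_cons_cons.2 ?_
        exact ⟨by omega, hc⟩
      · simpa using hlast

lemma taut_sat (x₀ : V) (f : V → Bool) :
    SatCNF f [[(x₀, true), (x₀, false)]] := by
  intro cl hcl
  simp only [List.mem_singleton] at hcl
  subst hcl
  cases hfx : f x₀
  · exact ⟨(x₀, false), by simp, hfx⟩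
  · exact ⟨(x₀, true), by simp, hfx⟩

lemma msat_split {P Q : List (CNF V)} {d : ℕ} (h : MSatYes (P ++ Q) d) :
    MSatYes P d ∧ MSatYes Q d := by
  rw [msat_iff] at h
  obtain ⟨fs, hfa, hc⟩ := h
  have hsplit : fs = fs.take P.length ++ fs.drop P.length := (List.take_append_drop _ _).symm
  rw [hsplit] at hc
  exact ⟨msat_iff.2 ⟨_, List.forall₂_take_append fs P Q hfa, hc.left_of_append⟩,
    msat_iff.2 ⟨_, List.forall₂_drop_append fs P Q hfa, hc.right_of_append⟩⟩

lemma msat_glue (x₀ : V) {A L : List (CNF V)} (hA : MSatYes A 1) (hL : MSatYes L 1) :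
    MSatYes (A ++ List.replicate (Fintype.card V) [[(x₀, true), (x₀, false)]] ++ L) 1 := by
  rw [msat_iff] at hA hL ⊢
  obtain ⟨fsA, hfaA, hcA⟩ := hA
  obtain ⟨fsL, hfaL, hcL⟩ := hL
  set b : V → Bool := fsL.headD (fun _ => true) with hb
  set a : V → Bool := fsA.getLastD b with ha
  obtain ⟨p, hp, hcp, hplast⟩ := path_lemma (Fintype.card V) a b (hdiff_le_card a b)
  refine ⟨fsA ++ p ++ fsL, ?_, ?_⟩
  · refine List.rel_append (List.rel_append hfaA ?_) hfaL
    rw [List.forall₂_iff_get]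
    refine ⟨by simp [hp], fun i h₁ h₂ => ?_⟩
    simp only [List.get_eq_getElem, List.getElem_replicate]
    exact taut_sat x₀ _
  · rw [List.append_assoc]
    refine hcA.append ?_ ?_
    · refine ((List.isChain_cons.1 hcp).2).append hcL ?_
      intro x hx y hy
      have hxb : x = b := last_mem_eq hplast hx
      rcases fsL with _ | ⟨y₀, fsL'⟩
      · simp at hy
      · simp only [List.head?_cons, Option.mem_def, Option.some.injEq] at hy
        subst hy
        have : b = y₀ := by simp [hb]
        rw [hxb, this]
        simp [hdiff]
    · intro x hx y hy
      rw [Option.mem_def] at hx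
      have hxa : x = a := by
        rw [ha, List.getLastD_eq_getLast?, hx, Option.getD_some]
      rw [hxa]
      rcases p with _ | ⟨p₀, p'⟩
      · have hab : a = b := by simpa using hplast
        rcases fsL with _ | ⟨y₀, fsL'⟩
        · simp at hy
        · simp only [List.nil_append, List.head?_cons, Option.mem_def,
            Option.some.injEq] at hy
          subst hy
          have : b = y₀ := by simp [hb]
          rw [hab, this]
          simp [hdiff]
      · simp only [List.cons_append, List.head?_cons, Option.mem_def,
          Option.some.injEq] at hy
        subst hy
        exact (List.isChain_cons_cons.1 hcp).1

lemma msat_nil : MSatYes ([] : List (CNF V)) 1 :=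
  ⟨fun _ => fun _ => true, fun i => i.elim0, fun i h => by simp at h⟩

lemma main_lemma (x₀ : V) (Φl : List (List (CNF V))) :
    MSatYes ((Φl.map fun A =>
      A ++ List.replicate (Fintype.card V) [[(x₀, true), (x₀, false)]]).flatten) 1 ↔
    ∀ A ∈ Φl, MSatYes A 1 := by
  induction Φl with
  | nil =>
    simp only [List.map_nil, List.flatten_nil]
    exact ⟨fun _ A hA => by simp at hA, fun _ => msat_nil⟩
  | cons A rest ih =>
    simp only [List.map_cons, List.flatten_cons]
    constructor
    · intro h
      have h1 := msat_split h
      have h2 := msat_split h1.1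
      intro B hB
      rcases List.mem_cons.1 hB with rfl | hB'
      · exact h2.1
      · exact ih.1 h1.2 B hB'
    · intro h
      have hA : MSatYes A 1 := h A (by simp)
      have hrest := ih.2 fun B hB => h B (List.mem_cons_of_mem _ hB)
      have := msat_glue x₀ hA hrest
      exact this

end Aux

theorem and_composition_correct {V : Type} [Fintype V] (x₀ : V) (t τ : ℕ)
    (Φs : Fin t → List (CNF V)) (hlen : ∀ i, (Φs i).length = τ) :
    MSatYes ((List.ofFn fun i : Fin t =>
        Φs i ++ List.replicate (Fintype.card V) [[(x₀, true), (x₀, false)]]).flatten) 1 ↔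
    ∀ i : Fin t, MSatYes (Φs i) 1 := by
  have heq : (List.ofFn fun i : Fin t =>
      Φs i ++ List.replicate (Fintype.card V) [[(x₀, true), (x₀, false)]]) =
      (List.ofFn Φs).map fun A =>
        A ++ List.replicate (Fintype.card V) [[(x₀, true), (x₀, false)]] := by
    rw [List.map_ofFn]; rfl
  rw [heq, main_lemma]
  constructor
  · intro h i
    exact h (Φs i) (by simp [List.mem_ofFn])
  · intro h A hA
    obtain ⟨i, rfl⟩ := List.mem_ofFn.1 hA
    exact h i
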